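/- arXiv:1304.5669 — 2 statements merged into one kernel-verified Lean document; each statement's English description precedes it below -/
import Mathlib

section
/- Fix an odd integer c ≥ 3, the pattern set being the cyclic shifts of the identity of S_c. The map rot: x ↦ (2 3 ⋯ n 1)∘x on S_n preserves, for every position i, whether the factor x_i x_{i+1} ⋯ x_{i+c-1} has standardization equal to a cyclic shift of the identity. In particular, rot permutes the set of non-avoiders, the set of hit-openers, and the set of hit-huggers. -/
/-- The standardization (order permutation) of a word with distinct letters. -/
def stdz (w : List ℕ) : List ℕ :=
  w.map (fun x => 1 + w.countP (fun y => decide (y < x)))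

/-- `u` is a cyclic shift of `m`. -/
def IsCyclicShiftOf (u m : List ℕ) : Prop := ∃ a ≤ m.length, u = m.rotate a

/-- The contiguous factor of `w` of length `c` starting at (0-indexed) position `i` is a hit:
its standardization is a cyclic shift of the identity of `S_c`. -/
def HitAt (c : ℕ) (w : List ℕ) (i : ℕ) : Prop :=
  i + c ≤ w.length ∧ IsCyclicShiftOf (stdz ((w.drop i).take c)) (List.range' 1 c)

/-- A non-avoider: a permutation with at least one hit. -/
def NonAvoiderId (c : ℕ) (w : List ℕ) : Prop := ∃ i, HitAt c w i

/-- A hit-opener: a permutation whose only hit starts at the first position. -/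
def HitOpener (c : ℕ) (w : List ℕ) : Prop :=
  HitAt c w 0 ∧ ∀ i, HitAt c w i → i = 0

/-- A hit-hugger: a permutation whose only hits start at the first position and at
position `n - c + 1` (0-indexed: `n - c`). -/
def HitHugger (c : ℕ) (w : List ℕ) : Prop :=
  HitAt c w 0 ∧ HitAt c w (w.length - c) ∧
    ∀ i, HitAt c w i → i = 0 ∨ i = w.length - c

/-- `rot`: add `1` to each letter, with `n` replaced by `1`. -/
def rotP (n : ℕ) (w : List ℕ) : List ℕ :=
  w.map (fun v => if v = n then 1 else v + 1)

/- ================= auxiliary material ================= -/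

/-- Cyclic successor on `{1,…,c}`. -/
def rotc (c v : ℕ) : ℕ := if v = c then 1 else v + 1

/-- Cyclic predecessor on `{1,…,c}`. -/
def rotc' (c v : ℕ) : ℕ := if v = 1 then c else v - 1

lemma rotc'_rotc (c v : ℕ) (hv : 1 ≤ v) : rotc' c (rotc c v) = v := by
  unfold rotc rotc'; split_ifs <;> omega

lemma countP_or_disjoint (l : List ℕ) (p q : ℕ → Bool)
    (h : ∀ a ∈ l, ¬(p a = true ∧ q a = true)) :
    l.countP (fun a => p a || q a) = l.countP p + l.countP q := by
  induction l with
  | nil => simp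
  | cons a l ih =>
    have ha := h a (by simp)
    have ih' := ih (fun b hb => h b (by simp [hb]))
    simp only [List.countP_cons, ih']
    cases hp : p a <;> cases hq : q a <;> simp [hp, hq] at ha ⊢ <;> omega

lemma two_le_length_of_mem {l : List ℕ} {a b : ℕ} (ha : a ∈ l) (hb : b ∈ l)
    (hab : a ≠ b) : 2 ≤ l.length := by
  have h1 : b ∈ l.erase a := (List.mem_erase_of_ne (Ne.symm hab)).mpr hb
  have h2 : 0 < (l.erase a).length := List.length_pos_of_mem h1
  have h3 := List.length_erase_of_mem ha
  omega

lemma map_rotc_range' (c : ℕ) :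
    (List.range' 1 c).map (rotc c) = (List.range' 1 c).rotate 1 := by
  cases c with
  | zero => simp
  | succ m =>
    have h1 : List.range' 1 (m + 1) = List.range' 1 m ++ [1 + m] := by
      simpa using List.range'_concat (step := 1) (s := 1) (n := m)
    have h2 : (List.range' 1 m).map (rotc (m + 1)) = List.range' 2 m := by
      have he : (List.range' 1 m).map (rotc (m + 1)) = (List.range' 1 m).map (1 + ·) := by
        apply List.map_congr_left
        intro v hv
        have hv' := List.mem_range'_1.mp hv
        unfold rotc; split_ifs <;> omega
      rw [he, List.map_add_range']
    have h3 : List.range' 1 (m + 1) = 1 :: List.range' 2 m := by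
      simpa using List.range'_succ (step := 1) (s := 1) (n := m)
    conv_lhs => rw [h1]
    conv_rhs => rw [h3]
    rw [List.map_append, h2, List.rotate_cons_succ, List.rotate_zero]
    have : rotc (m + 1) (1 + m) = 1 := by unfold rotc; split_ifs <;> omega
    simp [this]

lemma map_rotc'_range' (c : ℕ) :
    (List.range' 1 c).map (rotc' c) = (List.range' 1 c).rotate (c - 1) := by
  cases c with
  | zero => simp
  | succ m =>
    have h3 : List.range' 1 (m + 1) = 1 :: List.range' 2 m := by
      simpa using List.range'_succ (step := 1) (s := 1) (n := m)
    have h2 : (List.range' 2 m).map (rotc' (m + 1)) = List.range' 1 m := by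
      have he : (List.range' 2 m).map (rotc' (m + 1)) = (List.range' 2 m).map (· - 1) := by
        apply List.map_congr_left
        intro v hv
        have hv' := List.mem_range'_1.mp hv
        unfold rotc'; split_ifs <;> omega
      rw [he]
      have h4 : List.range' 2 m = (List.range' 1 m).map (1 + ·) := by
        rw [List.map_add_range']
      rw [h4, List.map_map]
      have : (List.range' 1 m).map ((· - 1) ∘ (1 + ·)) = (List.range' 1 m).map id := by
        apply List.map_congr_left
        intro v _
        simp [Function.comp]
      rw [this, List.map_id]
    -- RHS: rotate m
    have hsplit : List.range' 1 (m + 1) = List.range' 1 m ++ List.range' (1 + m) 1 := by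
      rw [List.range'_append_1, Nat.add_comm]
    have hlenm : (List.range' 1 m).length = m := by simp
    have hrot : (List.range' 1 (m + 1)).rotate m = List.range' (1 + m) 1 ++ List.range' 1 m := by
      rw [List.rotate_eq_drop_append_take (by simp), hsplit,
        List.drop_left' hlenm, List.take_left' hlenm]
    have hr1 : rotc' (m + 1) 1 = m + 1 := by unfold rotc'; simp
    rw [h3, List.map_cons, h2, hr1]
    simp only [Nat.add_sub_cancel]
    rw [← h3, hrot]
    simp only [List.range'_succ, List.range'_zero, Nat.add_comm, List.singleton_append]

lemma cyc_rotate (c a : ℕ) (hc : 0 < c) :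
    IsCyclicShiftOf ((List.range' 1 c).rotate a) (List.range' 1 c) := by
  refine ⟨a % c, ?_, ?_⟩
  · simpa using (Nat.mod_lt a hc).le
  · have := List.rotate_mod (List.range' 1 c) a
    simp only [List.length_range'] at this
    exact this.symm

lemma cyc_map_rotc (c : ℕ) (hc : 0 < c) (L : List ℕ) (hL : ∀ v ∈ L, 1 ≤ v) :
    IsCyclicShiftOf (L.map (rotc c)) (List.range' 1 c) ↔
      IsCyclicShiftOf L (List.range' 1 c) := by
  constructor
  · rintro ⟨a, -, h⟩
    have hL' : L = (L.map (rotc c)).map (rotc' c) := by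
      rw [List.map_map]
      have : L.map (rotc' c ∘ rotc c) = L.map id :=
        List.map_congr_left (fun v hv => rotc'_rotc c v (hL v hv))
      rw [this, List.map_id]
    have : L = (List.range' 1 c).rotate (c - 1 + a) := by
      rw [hL', h, List.map_rotate, map_rotc'_range', List.rotate_rotate]
    rw [this]
    exact cyc_rotate c _ hc
  · rintro ⟨a, -, h⟩
    have : L.map (rotc c) = (List.range' 1 c).rotate (1 + a) := by
      rw [h, List.map_rotate, map_rotc_range', List.rotate_rotate]
    rw [this]
    exact cyc_rotate c _ hc

lemma stdz_rotP_not_mem (n : ℕ) (u : List ℕ) (hn : n ∉ u) :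
    stdz (rotP n u) = stdz u := by
  unfold stdz rotP
  rw [List.map_map]
  apply List.map_congr_left
  intro x hx
  have hx' : x ≠ n := fun h => hn (h ▸ hx)
  simp only [Function.comp_apply, if_neg hx', List.countP_map]
  congr 1
  apply List.countP_congr
  intro y hy
  have hy' : y ≠ n := fun h => hn (h ▸ hy)
  simp [hy']

lemma stdz_rotP_mem (n : ℕ) (u : List ℕ) (hnd : u.Nodup)
    (hub : ∀ x ∈ u, 1 ≤ x ∧ x ≤ n) (hn : n ∈ u) :
    stdz (rotP n u) = (stdz u).map (rotc u.length) := by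
  unfold stdz rotP
  rw [List.map_map, List.map_map]
  apply List.map_congr_left
  intro x hx
  simp only [Function.comp_apply, List.countP_map]
  have hx1 := (hub x hx).1
  have hcpos : 0 < u.length := List.length_pos_of_mem hx
  by_cases hxn : x = n
  · rw [if_pos hxn]
    have h0 : u.countP ((fun y => decide (y < 1)) ∘ fun v => if v = n then 1 else v + 1) = 0 := by
      rw [List.countP_eq_zero]
      intro y hy
      have hy1 := (hub y hy).1
      simp only [Function.comp_apply]
      split_ifs <;> simp <;> omega
    have hcn : u.countP (fun y => !decide (y < x)) = 1 := by
      have he : u.countP (fun y => !decide (y < x)) = u.countP (· == x) := by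
        apply List.countP_congr
        intro y hy
        have h2 := (hub y hy).2
        simp only [Bool.not_eq_true', decide_eq_false_iff_not, beq_iff_eq]
        omega
      rw [he, ← List.count_eq_countP, List.count_eq_one_of_mem hnd hx]
    have hsum := List.length_eq_countP_add_countP (p := fun y => decide (y < x)) (l := u)
    simp only [decide_not, decide_eq_true_eq] at hsum
    rw [h0]
    unfold rotc
    split_ifs <;> omega
  · rw [if_neg hxn]
    have hxlt : x < n := by have := (hub x hx).2; omega
    have hstep : u.countP ((fun y => decide (y < x + 1)) ∘ fun v => if v = n then 1 else v + 1)
        = u.countP (fun y => decide (y < x) || decide (y = n)) := by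
      apply List.countP_congr
      intro y hy
      have hy1 := (hub y hy).1
      simp only [Function.comp_apply]
      split_ifs with h <;> simp [h] <;> omega
    have hdisj : u.countP (fun y => decide (y < x) || decide (y = n))
        = u.countP (fun y => decide (y < x)) + u.countP (fun y => decide (y = n)) := by
      apply countP_or_disjoint
      intro a _ ⟨h1, h2⟩
      simp at h1 h2
      omega
    have hone : u.countP (fun y => decide (y = n)) = 1 := by
      have he : u.countP (fun y => decide (y = n)) = u.countP (· == n) := by
        apply List.countP_congr
        intro y _
        simp
      rw [he, ← List.count_eq_countP, List.count_eq_one_of_mem hnd hn]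
    have h2le : 2 ≤ u.countP (fun y => !decide (y < x)) := by
      rw [List.countP_eq_length_filter]
      have hxf : x ∈ u.filter (fun y => !decide (y < x)) :=
        List.mem_filter.mpr ⟨hx, by simp⟩
      have hnf : n ∈ u.filter (fun y => !decide (y < x)) :=
        List.mem_filter.mpr ⟨hn, by simp; omega⟩
      exact two_le_length_of_mem hxf hnf hxn
    have hsum := List.length_eq_countP_add_countP (p := fun y => decide (y < x)) (l := u)
    simp only [decide_not, decide_eq_true_eq] at hsum
    rw [hstep, hdisj, hone]
    unfold rotc
    split_ifs <;> omega

theorem hitAt_rotP (c n : ℕ) (hc : 0 < c) (w : List ℕ)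
    (hw : w.Perm (List.range' 1 n)) (i : ℕ) :
    HitAt c (rotP n w) i ↔ HitAt c w i := by
  have hlen : (rotP n w).length = w.length := List.length_map _
  unfold HitAt
  rw [hlen]
  by_cases hic : i + c ≤ w.length
  case neg => simp [hic]
  simp only [hic, true_and]
  set u := (w.drop i).take c with hu
  have hfac : ((rotP n w).drop i).take c = rotP n u := by
    simp [rotP, hu]
  have hsub : u.Sublist w := (List.take_sublist _ _).trans (List.drop_sublist _ _)
  have hnd : u.Nodup := hsub.nodup (hw.nodup_iff.mpr (List.nodup_range' _))
  have hub : ∀ x ∈ u, 1 ≤ x ∧ x ≤ n := by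
    intro x hxu
    have hx : x ∈ List.range' 1 n := hw.mem_iff.mp (hsub.subset hxu)
    have := List.mem_range'_1.mp hx
    omega
  have hul : u.length = c := by
    rw [hu, List.length_take, List.length_drop]
    omega
  rw [hfac]
  by_cases hmem : n ∈ u
  · rw [stdz_rotP_mem n u hnd hub hmem, hul]
    apply cyc_map_rotc c hc (stdz u)
    intro v hv
    unfold stdz at hv
    simp only [List.mem_map] at hv
    obtain ⟨x, -, hxv⟩ := hv
    omega
  · rw [stdz_rotP_not_mem n u hmem]

/-- For odd `c ≥ 3`, the map `rot` preserves, positionwise, whether each length-`c` factor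
is a hit (standardization a cyclic shift of the identity of `S_c`); in particular it
permutes the non-avoiders, the hit-openers, and the hit-huggers of `S_n`. -/
theorem stmt7 (c n : ℕ) (hc : 3 ≤ c) (hco : Odd c) (w : List ℕ)
    (hw : w.Perm (List.range' 1 n)) :
    (∀ i, HitAt c (rotP n w) i ↔ HitAt c w i) ∧
    (NonAvoiderId c (rotP n w) ↔ NonAvoiderId c w) ∧
    (HitOpener c (rotP n w) ↔ HitOpener c w) ∧
    (HitHugger c (rotP n w) ↔ HitHugger c w) := by
  have h := hitAt_rotP c n (by omega) w hw
  have hlen : (rotP n w).length = w.length := List.length_map _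
  refine ⟨h, exists_congr h, ?_, ?_⟩
  · unfold HitOpener
    rw [h 0]
    exact and_congr_right fun _ => forall_congr' fun i => imp_congr (h i) Iff.rfl
  · unfold HitHugger
    rw [hlen, h 0, h (w.length - c)]
    refine and_congr_right fun _ => and_congr_right fun _ =>
      forall_congr' fun i => imp_congr (h i) Iff.rfl
end

section
/- Let c be odd ≥ 3 and m ∈ S_c. The equivalence on S_n generated by replacing a contiguous c-letter factor whose standardization is a cyclic shift of m by a rearrangement of the same letters whose standardization is also a cyclic shift of m preserves the sign of a permutation: if φ ≡ ψ then sgn(φ) = sgn(ψ). -/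
/-- The number of inversions of a word. -/
def inv (w : List ℕ) : ℕ :=
  ((Finset.range w.length ×ˢ Finset.range w.length).filter
    (fun p => p.1 < p.2 ∧ w.getD p.2 0 < w.getD p.1 0)).card

/-- One pattern-replacement move for the cyclic-shift relation attached to `m`. -/
def StepCyc (m : List ℕ) (φ ψ : List ℕ) : Prop :=
  ∃ a u v b : List ℕ, φ = a ++ u ++ b ∧ ψ = a ++ v ++ b ∧
    u.length = m.length ∧ u.Perm v ∧
    IsCyclicShiftOf (stdz u) m ∧ IsCyclicShiftOf (stdz v) m

/-- Recursive inversion count. -/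
def inv' : List ℕ → ℕ
  | [] => 0
  | x :: t => t.countP (fun y => decide (y < x)) + inv' t

lemma countP_lt_sum (x : ℕ) (t : List ℕ) :
    (∑ j ∈ Finset.range t.length, if t.getD j 0 < x then 1 else 0)
      = t.countP (fun y => decide (y < x)) := by
  induction t with
  | nil => simp
  | cons a t ih =>
    rw [List.length_cons, Finset.sum_range_succ']
    simp only [List.getD_cons_succ, List.getD_cons_zero, ih, List.countP_cons]
    by_cases h : a < x <;> simp [h] <;> omega

lemma dsum_eq (w : List ℕ) :
    (∑ i ∈ Finset.range w.length, ∑ j ∈ Finset.range w.length,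
      if i < j ∧ w.getD j 0 < w.getD i 0 then 1 else 0) = inv' w := by
  induction w with
  | nil => simp [inv']
  | cons x t ih =>
    rw [List.length_cons, Finset.sum_range_succ']
    have h0 : (∑ j ∈ Finset.range (t.length + 1),
        if (0:ℕ) < j ∧ (x :: t).getD j 0 < (x :: t).getD 0 0 then 1 else 0)
        = t.countP (fun y => decide (y < x)) := by
      rw [Finset.sum_range_succ', ← countP_lt_sum x t]
      simp
    have h1 : ∀ i, (∑ j ∈ Finset.range (t.length + 1),
        if i + 1 < j ∧ (x :: t).getD j 0 < (x :: t).getD (i+1) 0 then 1 else 0)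
        = ∑ j ∈ Finset.range t.length,
            if i < j ∧ t.getD j 0 < t.getD i 0 then 1 else 0 := by
      intro i
      rw [Finset.sum_range_succ']
      simp
    simp only [h1, h0, ih, inv']
    omega

lemma inv_eq_inv' (w : List ℕ) : inv w = inv' w := by
  rw [← dsum_eq]
  unfold inv
  rw [Finset.card_filter, Finset.sum_product]

/-- Cross inversions between two blocks. -/
def cross (s t : List ℕ) : ℕ :=
  (s.map (fun x => t.countP (fun y => decide (y < x)))).sum

lemma inv'_append (s t : List ℕ) : inv' (s ++ t) = inv' s + cross s t + inv' t := by
  induction s with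
  | nil => simp [inv', cross]
  | cons x s ih =>
    simp only [List.cons_append, inv', ih, cross, List.map_cons, List.sum_cons,
      List.countP_append, List.append_eq]
    omega

lemma cross_perm_left {s₁ s₂ : List ℕ} (t : List ℕ) (h : s₁.Perm s₂) :
    cross s₁ t = cross s₂ t :=
  (h.map _).sum_eq

lemma cross_perm_right (s : List ℕ) {t₁ t₂ : List ℕ} (h : t₁.Perm t₂) :
    cross s t₁ = cross s t₂ := by
  simp [cross, h.countP_eq]

lemma cross_singleton (t : List ℕ) (x : ℕ) :
    cross t [x] = t.countP (fun y => decide (x < y)) := by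
  induction t with
  | nil => simp [cross]
  | cons a t ih =>
    simp only [cross, List.map_cons, List.sum_cons, List.countP_cons] at *
    rw [ih]
    by_cases h : x < a <;> simp [h] <;> omega

lemma countP_lt_add_gt (x : ℕ) (t : List ℕ) (hx : x ∉ t) :
    t.countP (fun y => decide (y < x)) + t.countP (fun y => decide (x < y)) = t.length := by
  induction t with
  | nil => simp
  | cons a t ih =>
    have ha : a ≠ x := fun h => hx (h ▸ (List.mem_cons_self : a ∈ a :: t))
    have hx' : x ∉ t := fun h => hx (List.mem_cons_of_mem a h)
    have := ih hx'
    simp only [List.countP_cons, List.length_cons]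
    rcases lt_trichotomy a x with h | h | h
    · simp [h, not_lt_of_gt h]; omega
    · exact absurd h ha
    · simp [h, not_lt_of_gt h]; omega

lemma inv'_rotate_one (w : List ℕ) (hn : w.Nodup) (ho : Odd w.length) :
    (Even (inv' (w.rotate 1)) ↔ Even (inv' w)) := by
  cases w with
  | nil => simp
  | cons x t =>
    have hx : x ∉ t := (List.nodup_cons.mp hn).1
    have hrot : (x :: t).rotate 1 = t ++ [x] := by
      simpa using List.rotate_cons_succ t x 0
    rw [hrot, inv'_append, cross_singleton]
    have hsum := countP_lt_add_gt x t hx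
    have hlen : Even t.length := by
      rcases ho with ⟨k, hk⟩
      simp only [List.length_cons] at hk
      exact ⟨k, by omega⟩
    have hlen2 : t.length % 2 = 0 := Nat.even_iff.mp hlen
    simp only [inv', List.countP_nil]
    rw [Nat.even_iff, Nat.even_iff]
    omega

lemma inv'_rotate (a : ℕ) (w : List ℕ) (hn : w.Nodup) (ho : Odd w.length) :
    (Even (inv' (w.rotate a)) ↔ Even (inv' w)) := by
  induction a with
  | zero => simp
  | succ a ih =>
    have : w.rotate (a + 1) = (w.rotate a).rotate 1 := by
      rw [List.rotate_rotate]
    rw [this]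
    rw [inv'_rotate_one _ (List.nodup_rotate.mpr hn) (by simpa using ho)]
    exact ih

lemma inv'_map_mono (f : ℕ → ℕ) (u : List ℕ)
    (hf : ∀ x ∈ u, ∀ y ∈ u, (f y < f x ↔ y < x)) :
    inv' (u.map f) = inv' u := by
  induction u with
  | nil => rfl
  | cons x t ih =>
    simp only [List.map_cons, inv', List.countP_map]
    rw [ih (fun a ha b hb => hf a (List.mem_cons_of_mem _ ha) b (List.mem_cons_of_mem _ hb))]
    congr 1
    apply List.countP_congr
    intro y hy
    simp [hf x (List.mem_cons_self : x ∈ x :: t) y (List.mem_cons_of_mem _ hy)]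

lemma stdz_hf (u : List ℕ) :
    ∀ x ∈ u, ∀ y ∈ u,
      ((1 + u.countP (fun z => decide (z < y))) < (1 + u.countP (fun z => decide (z < x)))
        ↔ y < x) := by
  have key : ∀ x ∈ u, ∀ y ∈ u, y < x →
      u.countP (fun z => decide (z < y)) < u.countP (fun z => decide (z < x)) := by
    intro x hx y hy hyx
    obtain ⟨s, t, rfl⟩ := List.append_of_mem hy
    have hmono : ∀ (l : List ℕ),
        l.countP (fun z => decide (z < y)) ≤ l.countP (fun z => decide (z < x)) := by
      intro l
      apply List.countP_mono_left
      intro a _ h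
      simp only [decide_eq_true_iff] at *
      omega
    have h1 := hmono s
    have h2 := hmono t
    simp only [List.countP_append, List.countP_cons]
    simp [hyx, lt_irrefl]
    omega
  intro x hx y hy
  constructor
  · intro h
    rcases lt_trichotomy y x with h' | h' | h'
    · exact h'
    · subst h'; omega
    · exact absurd (by have := key y hy x hx h'; omega) (not_lt_of_gt h)
  · intro h
    have := key x hx y hy h
    omega

lemma inv'_stdz (u : List ℕ) : inv' (stdz u) = inv' u :=
  inv'_map_mono _ u (stdz_hf u)


lemma cross_append_left (s₁ s₂ t : List ℕ) :
    cross (s₁ ++ s₂) t = cross s₁ t + cross s₂ t := by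
  simp [cross]

lemma step_parity (c : ℕ) (hco : Odd c) (m : List ℕ)
    (hm : m.Perm (List.range' 1 c)) {φ ψ : List ℕ} (h : StepCyc m φ ψ) :
    (Even (inv' φ) ↔ Even (inv' ψ)) := by
  obtain ⟨a, u, v, b, rfl, rfl, hlen, huv, ⟨i, hi, hu⟩, ⟨j, hj, hv⟩⟩ := h
  have hmnodup : m.Nodup := hm.nodup_iff.mpr List.nodup_range'
  have hmlen : Odd m.length := by
    rw [hm.length_eq, List.length_range']; exact hco
  have hu' : Even (inv' u) ↔ Even (inv' m) := by
    rw [← inv'_stdz u, hu]; exact inv'_rotate i m hmnodup hmlen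
  have hv' : Even (inv' v) ↔ Even (inv' m) := by
    rw [← inv'_stdz v, hv]; exact inv'_rotate j m hmnodup hmlen
  have eu : inv' u % 2 = inv' v % 2 := by
    rw [Nat.even_iff, Nat.even_iff] at hu' hv'
    omega
  have c1 : cross a u = cross a v := cross_perm_right a huv
  have c2 : cross u b = cross v b := cross_perm_left b huv
  rw [Nat.even_iff, Nat.even_iff]
  simp only [inv'_append, cross_append_left, c1, c2]
  omega

/-- For odd `c ≥ 3` and `m ∈ S_c`, the cyclic-shift replacement equivalence preserves the
sign of a permutation: equivalent permutations have inversion counts of equal parity. -/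
theorem stmt18 (c : ℕ) (hc : 3 ≤ c) (hco : Odd c) (m : List ℕ)
    (hm : m.Perm (List.range' 1 c)) (φ ψ : List ℕ)
    (h : Relation.EqvGen (StepCyc m) φ ψ) :
    (Even (inv φ) ↔ Even (inv ψ)) := by
  simp only [inv_eq_inv']
  induction h with
  | rel x y hr => exact step_parity c hco m hm hr
  | refl x => exact Iff.rfl
  | symm x y _ ih => exact ih.symm
  | trans x y z _ _ ih1 ih2 => exact ih1.trans ih2
end
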